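/- arXiv:1504.00127 — 4 statements merged into one kernel-verified Lean document; each statement's English description precedes it below -/
import Mathlib

section
/- Let Ω ⊆ ℝ^d be a domain (nonempty open connected set) with boundary Γ, let A be a bounded nonempty subset of Γ, and let μ be a regular Borel measure supported on A. If there exist a, R > 0 and s ∈ (0,d) such that μ(A ∩ B(x;r)) ≥ a·r^s for all x ∈ A and all r ∈ (0,R), then there exists c > 0 such that |A_r| ≤ c·r^{d−s} for all r ∈ (0,R). -/
open MeasureTheory Metric Set
open scoped ENNReal NNReal

noncomputable section

/-- Euclidean space ℝ^d. -/
abbrev Euc (d : ℕ) : Type := EuclideanSpace ℝ (Fin d)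


/-- The inner `r`-neighbourhood `A_r = {x ∈ closure Ω : d_A(x) < r}`. -/
def innNbhd (d : ℕ) (Ω A : Set (Euc d)) (r : ℝ) : Set (Euc d) :=
  {x ∈ closure Ω | infDist x A < r}

/-- A maximal `r`-separated subset of `A` exists; it is a subset of `A`, is `r`-separated,
and every point of `A` is within distance `< r` of it. -/
lemma exists_maximal_separated {X : Type*} [MetricSpace X] (A : Set X) (r : ℝ) (hr : 0 < r) :
    ∃ T ⊆ A, (∀ x ∈ T, ∀ y ∈ T, x ≠ y → r ≤ dist x y) ∧
      (∀ y ∈ A, ∃ t ∈ T, dist y t < r) := by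
  set S : Set (Set X) := {T | T ⊆ A ∧ ∀ x ∈ T, ∀ y ∈ T, x ≠ y → r ≤ dist x y} with hS
  have hemp : (∅ : Set X) ∈ S := ⟨empty_subset _, by simp⟩
  obtain ⟨T, hTmax⟩ := zorn_subset S (fun c hcS hchain => by
    rcases c.eq_empty_or_nonempty with rfl | hcne
    · exact ⟨∅, hemp, by simp⟩
    refine ⟨⋃₀ c, ⟨?_, ?_⟩, fun s hs => subset_sUnion_of_mem hs⟩
    · exact sUnion_subset fun s hs => (hcS hs).1
    · rintro x hx y hy hxy
      obtain ⟨s₁, hs₁, hxs₁⟩ := hx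
      obtain ⟨s₂, hs₂, hys₂⟩ := hy
      rcases hchain.total hs₁ hs₂ with h | h
      · exact (hcS hs₂).2 x (h hxs₁) y hys₂ hxy
      · exact (hcS hs₁).2 x hxs₁ y (h hys₂) hxy)
  refine ⟨T, hTmax.prop.1, hTmax.prop.2, fun y hy => ?_⟩
  by_contra hcon
  push_neg at hcon
  have hyT : y ∉ T := fun hyT => by
    have := hcon y hyT; simp [dist_self] at this; linarith
  have hins : insert y T ∈ S := by
    constructor
    · exact insert_subset hy hTmax.prop.1
    · rintro x (rfl | hx) z (rfl | hz) hne
      · exact absurd rfl hne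
      · exact hcon z hz
      · rw [dist_comm]; exact hcon x hx
      · exact hTmax.prop.2 x hx z hz hne
  exact hyT (hTmax.2 hins (subset_insert y T) (mem_insert y T))

set_option maxHeartbeats 1000000 in
/-- Lemma 2.2(I): a lower Ahlfors-type mass bound for a measure supported on a bounded
nonempty subset `A` of the boundary of a domain `Ω` yields the upper volume bound
`|A_r| ≤ c · r^(d-s)` for the inner neighbourhoods of `A`. -/
theorem stmt_0 (d : ℕ) (Ω : Set (Euc d)) (hΩopen : IsOpen Ω) (hΩconn : IsConnected Ω)
    (A : Set (Euc d)) (hAΓ : A ⊆ frontier Ω) (hAne : A.Nonempty)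
    (hAbd : Bornology.IsBounded A)
    (μ : Measure (Euc d)) (hμreg : μ.Regular) (hμsupp : μ Aᶜ = 0)
    (a R s : ℝ) (ha : 0 < a) (hR : 0 < R) (hs0 : 0 < s) (hsd : s < d)
    (hlow : ∀ x ∈ A, ∀ r : ℝ, 0 < r → r < R →
      ENNReal.ofReal (a * r ^ s) ≤ μ (A ∩ ball x r)) :
    ∃ c > (0 : ℝ), ∀ r : ℝ, 0 < r → r < R →
      volume (innNbhd d Ω A r) ≤ ENNReal.ofReal (c * r ^ ((d : ℝ) - s)) := by
  classical
  -- total mass is finite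
  have hKcomp : IsCompact (closure A) := hAbd.isCompact_closure
  have hMfin : μ univ < ∞ := by
    have h1 : μ univ ≤ μ (closure A) + μ Aᶜ := by
      refine le_trans (measure_mono ?_) (measure_union_le _ _)
      intro x _
      by_cases hx : x ∈ A
      · exact Or.inl (subset_closure hx)
      · exact Or.inr hx
    rw [hμsupp, add_zero] at h1
    exact lt_of_le_of_lt h1 hKcomp.measure_lt_top
  set M : ℝ := (μ univ).toReal with hM
  have hM0 : 0 ≤ M := ENNReal.toReal_nonneg
  set V : ℝ≥0∞ := volume (ball (0 : Euc d) 1) with hV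
  have hVfin : V ≠ ∞ := measure_ball_lt_top.ne
  set V' : ℝ := V.toReal with hV'
  have hV'0 : 0 ≤ V' := ENNReal.toReal_nonneg
  -- the constant
  set c₀ : ℝ := M * V' * 2 ^ d * 2 ^ s / a with hc₀
  have hc₀0 : 0 ≤ c₀ := by positivity
  refine ⟨c₀ + 1, by linarith, fun r hr hrR => ?_⟩
  have hrpow : (0 : ℝ) < r ^ ((d : ℝ) - s) := Real.rpow_pos_of_pos hr _
  -- maximal r-separated subset of A
  obtain ⟨T, hTA, hTsep, hTcov⟩ := exists_maximal_separated A r hr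
  -- T is finite
  have hTfin : T.Finite := by
    obtain ⟨F, hFsub, hFfin, hFcov⟩ := hKcomp.finite_cover_balls (e := r / 2) (by linarith)
    have : T ⊆ ⋃ x ∈ F, T ∩ ball x (r / 2) := by
      intro t ht
      obtain ⟨x, hx, htx⟩ := mem_iUnion₂.1 (hFcov (subset_closure (hTA ht)))
      exact mem_iUnion₂.2 ⟨x, hx, ht, htx⟩
    refine Set.Finite.subset (hFfin.biUnion fun x _ => ?_) this
    refine Set.Subsingleton.finite fun t₁ ht₁ t₂ ht₂ => ?_
    by_contra hne
    have := hTsep t₁ ht₁.1 t₂ ht₂.1 hne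
    have h12 : dist t₁ t₂ < r := by
      calc dist t₁ t₂ ≤ dist t₁ x + dist x t₂ := dist_triangle _ _ _
        _ < r / 2 + r / 2 := by
            rw [dist_comm x t₂]
            exact add_lt_add ht₁.2 ht₂.2
        _ = r := by ring
    linarith
  set F : Finset (Euc d) := hTfin.toFinset with hF
  have hFmem : ∀ t, t ∈ F ↔ t ∈ T := fun t => hTfin.mem_toFinset
  -- disjoint small balls give a bound on the cardinality
  have hsum : (F.card : ℝ≥0∞) * ENNReal.ofReal (a * (r / 2) ^ s) ≤ μ univ := by
    have hdisj : (F : Set (Euc d)).PairwiseDisjoint fun t => ball t (r / 2) := by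
      intro t₁ ht₁ t₂ ht₂ hne
      refine Set.disjoint_left.2 fun z hz₁ hz₂ => ?_
      have hsep := hTsep t₁ ((hFmem t₁).1 ht₁) t₂ ((hFmem t₂).1 ht₂) hne
      have : dist t₁ t₂ < r := by
        calc dist t₁ t₂ ≤ dist t₁ z + dist z t₂ := dist_triangle _ _ _
          _ < r / 2 + r / 2 := by rw [dist_comm t₁ z]; exact add_lt_add hz₁ hz₂
          _ = r := by ring
      linarith
    have heq : μ (⋃ t ∈ F, ball t (r / 2)) = ∑ t ∈ F, μ (ball t (r / 2)) :=
      measure_biUnion_finset hdisj fun t _ => measurableSet_ball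
    have hle : ∀ t ∈ F, ENNReal.ofReal (a * (r / 2) ^ s) ≤ μ (ball t (r / 2)) := by
      intro t ht
      refine le_trans (hlow t (hTA ((hFmem t).1 ht)) (r / 2) (by linarith) (by linarith)) ?_
      exact measure_mono inter_subset_right
    calc (F.card : ℝ≥0∞) * ENNReal.ofReal (a * (r / 2) ^ s)
        = F.card • ENNReal.ofReal (a * (r / 2) ^ s) := by rw [nsmul_eq_mul]
      _ ≤ ∑ t ∈ F, μ (ball t (r / 2)) := Finset.card_nsmul_le_sum F _ _ hle
      _ = μ (⋃ t ∈ F, ball t (r / 2)) := heq.symm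
      _ ≤ μ univ := measure_mono (subset_univ _)
  have hε : 0 < a * (r / 2) ^ s := by positivity
  have hcard : (F.card : ℝ) ≤ M / (a * (r / 2) ^ s) := by
    rw [le_div_iff₀ hε]
    have := ENNReal.toReal_mono hMfin.ne hsum
    rwa [ENNReal.toReal_mul, ENNReal.toReal_natCast, ENNReal.toReal_ofReal hε.le] at this
  -- covering of the inner neighbourhood by big balls
  have hcover : innNbhd d Ω A r ⊆ ⋃ t ∈ F, ball t (2 * r) := by
    rintro x ⟨-, hxd⟩
    obtain ⟨y, hyA, hxy⟩ := (infDist_lt_iff hAne).1 hxd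
    obtain ⟨t, htT, hyt⟩ := hTcov y hyA
    refine mem_iUnion₂.2 ⟨t, (hFmem t).2 htT, ?_⟩
    calc dist x t ≤ dist x y + dist y t := dist_triangle _ _ _
      _ < r + r := add_lt_add hxy hyt
      _ = 2 * r := by ring
  -- volume of each big ball
  have hballvol : ∀ t : Euc d, volume (ball t (2 * r)) = ENNReal.ofReal ((2 * r) ^ d * V') := by
    intro t
    rw [Measure.addHaar_ball_of_pos volume t (by linarith : (0:ℝ) < 2 * r),
      finrank_euclideanSpace_fin, ENNReal.ofReal_mul (by positivity), ← hV,
      ENNReal.ofReal_toReal hVfin]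
  -- assemble the volume bound
  have hvol : volume (innNbhd d Ω A r)
      ≤ ENNReal.ofReal ((F.card : ℝ) * ((2 * r) ^ d * V')) := by
    calc volume (innNbhd d Ω A r) ≤ volume (⋃ t ∈ F, ball t (2 * r)) := measure_mono hcover
      _ ≤ ∑ t ∈ F, volume (ball t (2 * r)) := measure_biUnion_finset_le F _
      _ = ∑ _t ∈ F, ENNReal.ofReal ((2 * r) ^ d * V') := by
          exact Finset.sum_congr rfl fun t _ => hballvol t
      _ = F.card • ENNReal.ofReal ((2 * r) ^ d * V') := by rw [Finset.sum_const]
      _ = ENNReal.ofReal ((F.card : ℝ) * ((2 * r) ^ d * V')) := by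
          rw [nsmul_eq_mul, ← ENNReal.ofReal_natCast,
            ← ENNReal.ofReal_mul (by positivity)]
  refine hvol.trans (ENNReal.ofReal_le_ofReal ?_)
  -- final real-number computation
  have hstep : (F.card : ℝ) * ((2 * r) ^ d * V')
      ≤ (M / (a * (r / 2) ^ s)) * ((2 * r) ^ d * V') := by
    apply mul_le_mul_of_nonneg_right hcard (by positivity)
  refine hstep.trans ?_
  have hkey : (M / (a * (r / 2) ^ s)) * ((2 * r) ^ d * V') = c₀ * r ^ ((d : ℝ) - s) := by
    have h2s : (0:ℝ) < (2:ℝ) ^ s := Real.rpow_pos_of_pos (by norm_num) s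
    have hrs : (0:ℝ) < r ^ s := Real.rpow_pos_of_pos hr s
    have hdiv : (r / 2) ^ s = r ^ s / 2 ^ s := Real.div_rpow hr.le (by norm_num : (0:ℝ) ≤ 2) s
    have hsub : r ^ ((d : ℝ) - s) = r ^ (d : ℕ) / r ^ s := by
      rw [Real.rpow_sub hr, Real.rpow_natCast]
    rw [hdiv, hsub, hc₀, mul_pow]
    field_simp
  rw [hkey]
  nlinarith [hrpow.le]
end
end

section
/- Let Ω ⊆ ℝ^d be a domain whose boundary Γ is Ahlfors s-regular with s ∈ (0, d−1). Then for every x ∈ Γ and every r > 0 one has |Ω ∩ B(x;r)| = |B(x;r)|; equivalently, the interior of the complement of Ω is empty. -/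
open MeasureTheory Metric Set
open scoped ENNReal NNReal

noncomputable section

/-- The boundary set `Γ` is (locally uniformly) Ahlfors `s`-regular. -/
def AhlforsRegular (d : ℕ) (Γ : Set (Euc d)) (s : ℝ) : Prop :=
  ∃ μ : Measure (Euc d), μ.Regular ∧ μ Γᶜ = 0 ∧
    ∀ x₀ ∈ Γ, ∀ R₀ : ℝ, 0 < R₀ → ∃ c > (0 : ℝ),
      ∀ x ∈ Γ ∩ ball x₀ R₀, ∀ r : ℝ, 0 < r → r < 2 * R₀ →
        ENNReal.ofReal (c⁻¹ * r ^ s) ≤ μ (Γ ∩ ball x₀ R₀ ∩ ball x r) ∧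
        μ (Γ ∩ ball x₀ R₀ ∩ ball x r) ≤ ENNReal.ofReal (c * r ^ s)


/-- Covering lemma from Ahlfors upper+lower bounds at one basepoint. -/
lemma cover_lemma {d : ℕ} {Γ : Set (Euc d)} (hΓ : MeasurableSet Γ)
    (μ : Measure (Euc d)) {x₀ : Euc d} (hx₀ : x₀ ∈ Γ) {R₀ c s : ℝ}
    (hR₀ : 0 < R₀) (hc : 0 < c) (hs : 0 < s)
    (hb : ∀ x ∈ Γ ∩ ball x₀ R₀, ∀ r : ℝ, 0 < r → r < 2 * R₀ →
        ENNReal.ofReal (c⁻¹ * r ^ s) ≤ μ (Γ ∩ ball x₀ R₀ ∩ ball x r) ∧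
        μ (Γ ∩ ball x₀ R₀ ∩ ball x r) ≤ ENNReal.ofReal (c * r ^ s)) :
    ∀ r : ℝ, 0 < r → r ≤ R₀ → ∃ T : Finset (Euc d),
      (↑T ⊆ Γ ∩ closedBall x₀ (R₀ / 2)) ∧
      ((T.card : ℝ) ≤ c ^ 2 * (3 * R₀) ^ s / r ^ s) ∧
      Γ ∩ closedBall x₀ (R₀ / 2) ⊆ ⋃ t ∈ T, ball t r := by
  intro r hr hrR
  set A := Γ ∩ closedBall x₀ (R₀ / 2) with hA
  have hAsub : A ⊆ Γ ∩ ball x₀ R₀ := by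
    intro z hz
    exact ⟨hz.1, lt_of_le_of_lt (mem_closedBall.1 hz.2) (by linarith)⟩
  -- total measure bound
  have htot : μ (Γ ∩ ball x₀ R₀) ≤ ENNReal.ofReal (c * (3 * R₀ / 2) ^ s) := by
    have h := (hb x₀ ⟨hx₀, mem_ball_self hR₀⟩ (3 * R₀ / 2) (by linarith) (by linarith)).2
    have : Γ ∩ ball x₀ R₀ ∩ ball x₀ (3 * R₀ / 2) = Γ ∩ ball x₀ R₀ := by
      apply inter_eq_self_of_subset_left
      intro z hz
      exact lt_of_lt_of_le (mem_ball.1 hz.2) (by linarith)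
    rwa [this] at h
  -- every r-separated finset in A has card ≤ M
  have hcard : ∀ T : Finset (Euc d), (↑T ⊆ A) →
      (∀ t₁ ∈ T, ∀ t₂ ∈ T, t₁ ≠ t₂ → r ≤ dist t₁ t₂) →
      (T.card : ℝ) ≤ c ^ 2 * (3 * R₀) ^ s / r ^ s := by
    intro T hTA hTsep
    have hdisj : (↑T : Set (Euc d)).PairwiseDisjoint
        (fun t => Γ ∩ ball x₀ R₀ ∩ ball t (r / 2)) := by
      intro t₁ ht₁ t₂ ht₂ hne
      apply Set.disjoint_left.2
      intro z hz₁ hz₂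
      have h1 := mem_ball.1 hz₁.2
      have h2 := mem_ball.1 hz₂.2
      have := hTsep t₁ ht₁ t₂ ht₂ hne
      have : dist t₁ t₂ ≤ dist t₁ z + dist z t₂ := dist_triangle _ _ _
      rw [dist_comm t₁ z] at this
      linarith
    have hmeas : ∀ t ∈ T, MeasurableSet (Γ ∩ ball x₀ R₀ ∩ ball t (r / 2)) :=
      fun t _ => ((hΓ.inter isOpen_ball.measurableSet).inter isOpen_ball.measurableSet)
    have hsum : (T.card : ℝ≥0∞) * ENNReal.ofReal (c⁻¹ * (r / 2) ^ s)
        ≤ ENNReal.ofReal (c * (3 * R₀ / 2) ^ s) := by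
      calc (T.card : ℝ≥0∞) * ENNReal.ofReal (c⁻¹ * (r / 2) ^ s)
          = ∑ _t ∈ T, ENNReal.ofReal (c⁻¹ * (r / 2) ^ s) := by
            rw [Finset.sum_const, nsmul_eq_mul]
        _ ≤ ∑ t ∈ T, μ (Γ ∩ ball x₀ R₀ ∩ ball t (r / 2)) := by
            apply Finset.sum_le_sum
            intro t ht
            exact (hb t (hAsub (hTA ht)) (r / 2) (by linarith) (by linarith)).1
        _ = μ (⋃ t ∈ T, Γ ∩ ball x₀ R₀ ∩ ball t (r / 2)) :=
            (measure_biUnion_finset hdisj hmeas).symm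
        _ ≤ μ (Γ ∩ ball x₀ R₀) := by
            apply measure_mono
            exact iUnion₂_subset fun t _ => inter_subset_left
        _ ≤ _ := htot
    -- extract real inequality
    have hpos : 0 < c⁻¹ * (r / 2) ^ s := by positivity
    have h1 : ((T.card : ℝ≥0∞)) ≤ ENNReal.ofReal ((c * (3 * R₀ / 2) ^ s) / (c⁻¹ * (r / 2) ^ s)) := by
      rw [ENNReal.ofReal_div_of_pos hpos]
      rw [ENNReal.le_div_iff_mul_le (Or.inl (by simp [ENNReal.ofReal_eq_zero]; linarith))
        (Or.inl ENNReal.ofReal_ne_top)]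
      exact hsum
    have h2 : (T.card : ℝ) ≤ (c * (3 * R₀ / 2) ^ s) / (c⁻¹ * (r / 2) ^ s) := by
      have := (ENNReal.le_ofReal_iff_toReal_le (by simp) (by positivity)).1 h1
      simpa using this
    have heq : (c * (3 * R₀ / 2) ^ s) / (c⁻¹ * (r / 2) ^ s) = c ^ 2 * (3 * R₀) ^ s / r ^ s := by
      rw [Real.div_rpow (by linarith) (by norm_num : (0:ℝ) ≤ 2),
        Real.div_rpow (by linarith) (by norm_num : (0:ℝ) ≤ 2)]
      have h2s : (0:ℝ) < (2:ℝ) ^ s := Real.rpow_pos_of_pos (by norm_num) s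
      field_simp
    linarith [h2, heq.le, heq.ge]
  classical
  set S : Set ℕ := {n | ∃ T : Finset (Euc d), (↑T ⊆ A) ∧
      (∀ t₁ ∈ T, ∀ t₂ ∈ T, t₁ ≠ t₂ → r ≤ dist t₁ t₂) ∧ T.card = n} with hS
  have hS0 : 0 ∈ S := ⟨∅, by simp⟩
  have hSbdd : BddAbove S := by
    refine ⟨Nat.ceil (max (c ^ 2 * (3 * R₀) ^ s / r ^ s) 0), ?_⟩
    rintro n ⟨T, hTA, hTsep, rfl⟩
    have h1 : (T.card : ℝ) ≤ max (c ^ 2 * (3 * R₀) ^ s / r ^ s) 0 :=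
      (hcard T hTA hTsep).trans (le_max_left _ _)
    exact_mod_cast h1.trans (Nat.le_ceil _)
  obtain ⟨T, hTA, hTsep, hTcard⟩ := Nat.sSup_mem ⟨0, hS0⟩ hSbdd
  refine ⟨T, hTA, hcard T hTA hTsep, ?_⟩
  intro a ha
  by_contra hcov
  simp only [mem_iUnion, mem_ball, not_exists, not_lt, exists_prop, not_and] at hcov
  have haT : a ∉ T := fun h => absurd (hcov a h) (by simp [hr, not_le])
  have hins : (insert a T).card ∈ S := by
    refine ⟨insert a T, ?_, ?_, rfl⟩
    · intro z hz
      rcases Finset.mem_coe.1 hz |> Finset.mem_insert.1 with rfl | h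
      · exact ha
      · exact hTA h
    · intro t₁ ht₁ t₂ ht₂ hne
      rcases Finset.mem_insert.1 ht₁ with rfl | h₁ <;> rcases Finset.mem_insert.1 ht₂ with rfl | h₂
      · exact absurd rfl hne
      · exact hcov t₂ h₂
      · rw [dist_comm]; exact hcov t₁ h₁
      · exact hTsep t₁ h₁ t₂ h₂ hne
  have := le_csSup hSbdd hins
  rw [Finset.card_insert_of_notMem haT, hTcard] at this
  omega

lemma null_lemma {d : ℕ} {Γ : Set (Euc d)} (hΓ : MeasurableSet Γ) {s : ℝ}
    (hs : 0 < s) (hsd : s < (d : ℝ)) (hreg : AhlforsRegular d Γ s) :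
    volume Γ = 0 := by
  obtain ⟨μ, -, -, hA⟩ := hreg
  apply measure_null_of_locally_null
  intro x₀ hx₀
  obtain ⟨c, hc, hb⟩ := hA x₀ hx₀ 1 one_pos
  refine ⟨Γ ∩ closedBall x₀ (1 / 2), ?_, ?_⟩
  · exact Filter.inter_mem self_mem_nhdsWithin
      (mem_nhdsWithin_of_mem_nhds (closedBall_mem_nhds _ (by norm_num)))
  -- volume of the piece is ≤ C r^(d-s) for all r ∈ (0,1]
  have key : ∀ r : ℝ, 0 < r → r ≤ 1 →
      volume (Γ ∩ closedBall x₀ (1 / 2)) ≤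
        ENNReal.ofReal (c ^ 2 * 3 ^ s * r ^ ((d : ℝ) - s)) * volume (ball (0 : Euc d) 1) := by
    intro r hr hr1
    obtain ⟨T, hTA, hTcard, hTcov⟩ := cover_lemma hΓ μ hx₀ one_pos hc hs hb r hr hr1
    have hballs : ∀ t : Euc d, volume (ball t r) ≤
        ENNReal.ofReal (r ^ ((d : ℝ))) * volume (ball (0 : Euc d) 1) := by
      intro t
      have h := Measure.addHaar_closedBall (volume : Measure (Euc d)) t hr.le
      rw [finrank_euclideanSpace_fin] at h
      calc volume (ball t r) ≤ volume (closedBall t r) := measure_mono ball_subset_closedBall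
        _ = ENNReal.ofReal (r ^ d) * volume (ball (0 : Euc d) 1) := h
        _ = ENNReal.ofReal (r ^ ((d : ℝ))) * volume (ball (0 : Euc d) 1) := by
            rw [← Real.rpow_natCast r d]
    calc volume (Γ ∩ closedBall x₀ (1 / 2))
        ≤ volume (⋃ t ∈ T, ball t r) := by
          apply measure_mono
          simpa using hTcov
      _ ≤ ∑ t ∈ T, volume (ball t r) := measure_biUnion_finset_le T _
      _ ≤ ∑ _t ∈ T, ENNReal.ofReal (r ^ ((d : ℝ))) * volume (ball (0 : Euc d) 1) :=
          Finset.sum_le_sum fun t _ => hballs t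
      _ = (T.card : ℝ≥0∞) * (ENNReal.ofReal (r ^ ((d : ℝ))) * volume (ball (0 : Euc d) 1)) := by
          rw [Finset.sum_const, nsmul_eq_mul]
      _ ≤ ENNReal.ofReal (c ^ 2 * (3 * 1) ^ s / r ^ s) *
            (ENNReal.ofReal (r ^ ((d : ℝ))) * volume (ball (0 : Euc d) 1)) := by
          gcongr
          rw [← ENNReal.ofReal_natCast]
          exact ENNReal.ofReal_le_ofReal hTcard
      _ = ENNReal.ofReal (c ^ 2 * 3 ^ s * r ^ ((d : ℝ) - s)) * volume (ball (0 : Euc d) 1) := by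
          rw [← mul_assoc, ← ENNReal.ofReal_mul (by positivity)]
          congr 2
          rw [mul_one, Real.rpow_sub hr]
          field_simp
  -- take r → 0
  have hV : volume (ball (0 : Euc d) 1) ≠ ⊤ := measure_ball_lt_top.ne
  have htend : Filter.Tendsto
      (fun r : ℝ => ENNReal.ofReal (c ^ 2 * 3 ^ s * r ^ ((d : ℝ) - s)) * volume (ball (0 : Euc d) 1))
      (nhdsWithin 0 (Ioi 0)) (nhds 0) := by
    have h0 : Filter.Tendsto (fun r : ℝ => c ^ 2 * 3 ^ s * r ^ ((d : ℝ) - s))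
        (nhdsWithin 0 (Ioi 0)) (nhds 0) := by
      have := (Real.continuousAt_rpow_const 0 ((d : ℝ) - s) (Or.inr (by linarith))).tendsto
      rw [Real.zero_rpow (by linarith : (d : ℝ) - s ≠ 0)] at this
      have := this.const_mul (c ^ 2 * 3 ^ s)
      rw [mul_zero] at this
      exact this.mono_left nhdsWithin_le_nhds
    have h1 : Filter.Tendsto
        (fun r : ℝ => ENNReal.ofReal (c ^ 2 * 3 ^ s * r ^ ((d : ℝ) - s)))
        (nhdsWithin 0 (Ioi 0)) (nhds 0) := by
      have := (ENNReal.continuous_ofReal.tendsto 0).comp h0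
      simpa [Function.comp_def] using this
    have := ENNReal.Tendsto.mul_const h1 (Or.inr hV)
    simpa using this
  have hev : ∀ᶠ r in nhdsWithin (0:ℝ) (Ioi 0),
      volume (Γ ∩ closedBall x₀ (1 / 2)) ≤
        ENNReal.ofReal (c ^ 2 * 3 ^ s * r ^ ((d : ℝ) - s)) * volume (ball (0 : Euc d) 1) := by
    filter_upwards [Ioc_mem_nhdsGT_of_mem (Set.left_mem_Ico.2 one_pos)] with r hr
    exact key r hr.1 hr.2
  have := ge_of_tendsto htend hev
  exact le_antisymm this (zero_le)

open scoped RealInnerProductSpace in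
lemma proj_lip {d : ℕ} (x e : Euc d) {a R : ℝ} (ha : 0 < a) (hR : 0 ≤ R)
    (z₁ z₂ : Euc d) (h1a : a ≤ ⟪e, z₁ - x⟫) (h1R : ‖z₁ - x‖ ≤ R)
    (h2a : a ≤ ⟪e, z₂ - x⟫) (h2R : ‖z₂ - x‖ ≤ R) :
    ‖(x + (‖e‖ ^ 2 / ⟪e, z₁ - x⟫) • (z₁ - x)) -
      (x + (‖e‖ ^ 2 / ⟪e, z₂ - x⟫) • (z₂ - x))‖ ≤
      (‖e‖ ^ 2 / a + ‖e‖ ^ 3 * R / a ^ 2) * ‖z₁ - z₂‖ := by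
  set q₁ : ℝ := ⟪e, z₁ - x⟫ with hq₁
  set q₂ : ℝ := ⟪e, z₂ - x⟫ with hq₂
  have hq₁0 : 0 < q₁ := lt_of_lt_of_le ha h1a
  have hq₂0 : 0 < q₂ := lt_of_lt_of_le ha h2a
  set L : ℝ := ‖e‖ with hL
  have hL0 : 0 ≤ L := norm_nonneg _
  have key : (x + (L ^ 2 / q₁) • (z₁ - x)) - (x + (L ^ 2 / q₂) • (z₂ - x)) =
      (L ^ 2 / q₁) • (z₁ - z₂) + (L ^ 2 / q₁ - L ^ 2 / q₂) • (z₂ - x) := by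
    module
  rw [key]
  have hinner : q₂ - q₁ = ⟪e, z₂ - z₁⟫ := by
    rw [hq₁, hq₂, ← inner_sub_right]
    congr 1
    abel
  have hCS : |q₂ - q₁| ≤ L * ‖z₁ - z₂‖ := by
    rw [hinner]
    calc |⟪e, z₂ - z₁⟫| ≤ ‖e‖ * ‖z₂ - z₁‖ := abs_real_inner_le_norm _ _
      _ = L * ‖z₁ - z₂‖ := by rw [norm_sub_rev]
  have hd : L ^ 2 / q₁ - L ^ 2 / q₂ = L ^ 2 * (q₂ - q₁) / (q₁ * q₂) := by
    field_simp
  calc ‖(L ^ 2 / q₁) • (z₁ - z₂) + (L ^ 2 / q₁ - L ^ 2 / q₂) • (z₂ - x)‖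
      ≤ ‖(L ^ 2 / q₁) • (z₁ - z₂)‖ + ‖(L ^ 2 / q₁ - L ^ 2 / q₂) • (z₂ - x)‖ :=
        norm_add_le _ _
    _ = |L ^ 2 / q₁| * ‖z₁ - z₂‖ + |L ^ 2 / q₁ - L ^ 2 / q₂| * ‖z₂ - x‖ := by
        rw [norm_smul, norm_smul, Real.norm_eq_abs, Real.norm_eq_abs]
    _ ≤ (L ^ 2 / a) * ‖z₁ - z₂‖ + (L ^ 2 * (L * ‖z₁ - z₂‖) / a ^ 2) * R := by
        gcongr
        · rw [abs_of_nonneg (by positivity)]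
          apply div_le_div_of_nonneg_left (by positivity) ha h1a
        · rw [hd, abs_div, abs_of_nonneg (by positivity : (0:ℝ) ≤ q₁ * q₂), abs_mul,
            abs_of_nonneg (by positivity : (0:ℝ) ≤ L ^ 2)]
          apply div_le_div₀ (by positivity) (by nlinarith [abs_nonneg (q₂ - q₁)])
            (by positivity) (by nlinarith)
    _ = (L ^ 2 / a + L ^ 3 * R / a ^ 2) * ‖z₁ - z₂‖ := by ring


lemma frontier_cross {X : Type*} [TopologicalSpace X] {Ω s : Set X} (hΩ : IsOpen Ω)
    (hs : IsPreconnected s) (h1 : (s ∩ Ω).Nonempty) (h2 : (s ∩ Ωᶜ).Nonempty) :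
    (s ∩ frontier Ω).Nonempty := by
  by_contra h
  rw [not_nonempty_iff_eq_empty] at h
  have hsub : s ⊆ Ω ∪ (closure Ω)ᶜ := by
    intro z hz
    by_cases hzΩ : z ∈ Ω
    · exact Or.inl hzΩ
    · by_cases hzc : z ∈ closure Ω
      · exfalso
        have hmem : z ∈ s ∩ frontier Ω := ⟨hz, by rw [hΩ.frontier_eq]; exact ⟨hzc, hzΩ⟩⟩
        rw [h] at hmem
        exact hmem
      · exact Or.inr hzc
  have h2' : (s ∩ (closure Ω)ᶜ).Nonempty := by
    obtain ⟨b, hbs, hbc⟩ := h2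
    refine ⟨b, hbs, fun hbcl => ?_⟩
    have : b ∈ s ∩ frontier Ω := ⟨hbs, by rw [hΩ.frontier_eq]; exact ⟨hbcl, hbc⟩⟩
    rw [h] at this
    exact this
  obtain ⟨z, hzs, hzΩ, hzc⟩ := hs Ω (closure Ω)ᶜ hΩ isClosed_closure.isOpen_compl hsub h1 h2'
  exact hzc (subset_closure hzΩ)

set_option maxHeartbeats 2000000 in
open scoped RealInnerProductSpace in
lemma interior_compl_empty {d : ℕ} {Ω : Set (Euc d)} (hΩopen : IsOpen Ω)
    (hΩne : Ω.Nonempty) {s : ℝ} (hs0 : 0 < s) (hsd : s < (d : ℝ) - 1)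
    (hreg : AhlforsRegular d (frontier Ω) s) :
    interior Ωᶜ = ∅ := by
  classical
  by_contra hne
  obtain ⟨y, hy⟩ := nonempty_iff_ne_empty.2 hne
  obtain ⟨ρ₀, hρ₀, hball⟩ := Metric.isOpen_iff.1 isOpen_interior y hy
  set ρ : ℝ := ρ₀ / 2 with hρdef
  have hρ : 0 < ρ := by positivity
  have hcb : closedBall y ρ ⊆ Ωᶜ :=
    (closedBall_subset_ball (by simp [hρdef]; linarith)).trans (hball.trans interior_subset)
  obtain ⟨x, hx⟩ := hΩne
  have hyc : y ∈ Ωᶜ := hcb (mem_closedBall_self hρ.le)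
  set e : Euc d := y - x with he
  have he0 : e ≠ 0 := sub_ne_zero.2 (fun h => hyc (h ▸ hx))
  set L : ℝ := ‖e‖ with hL
  have hL0 : 0 < L := norm_pos_iff.2 he0
  obtain ⟨ε, hε, hεball⟩ := Metric.isOpen_iff.1 hΩopen x hx
  set R : ℝ := L + ρ with hR
  have hR0 : 0 < R := by positivity
  set t₀ : ℝ := ε / R with ht₀
  have ht₀0 : 0 < t₀ := by positivity
  set a : ℝ := t₀ * L ^ 2 with ha
  have ha0 : 0 < a := by positivity
  -- the orthogonal complement
  set F : Submodule ℝ (Euc d) := (ℝ ∙ e)ᗮ with hF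
  set m : ℕ := Module.finrank ℝ F with hm
  have hm1 : 1 + m = d := by
    rw [hm, hF, ← finrank_span_singleton (K := ℝ) he0]
    rw [Submodule.finrank_add_finrank_orthogonal, finrank_euclideanSpace_fin]
  have hms : s < (m : ℝ) := by
    have : (m : ℝ) = (d : ℝ) - 1 := by
      have := hm1
      push_cast [← this]
      ring
    linarith
  -- the projection map
  set q : Euc d → ℝ := fun z => ⟪e, z - x⟫ with hq
  set π : Euc d → Euc d := fun z => x + (‖e‖ ^ 2 / ⟪e, z - x⟫) • (z - x) with hπ
  -- existence of frontier points projecting to prescribed targets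
  have hex : ∀ v : F, ‖v‖ ≤ ρ → ∃ z : Euc d,
      z ∈ frontier Ω ∧ a ≤ q z ∧ ‖z - x‖ ≤ R ∧ π z = y + (v : Euc d) := by
    intro v hv
    set w : Euc d := y + (v : Euc d) with hw
    have hwc : w ∈ Ωᶜ := by
      apply hcb
      simp only [mem_closedBall, dist_eq_norm, hw, add_sub_cancel_left]
      exact hv
    have hseg := frontier_cross hΩopen (convex_segment x w).isPreconnected
      ⟨x, left_mem_segment ℝ x w, hx⟩ ⟨w, right_mem_segment ℝ x w, hwc⟩
    obtain ⟨z, hzseg, hzΓ⟩ := hseg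
    rw [segment_eq_image'] at hzseg
    obtain ⟨t, ht, hzt⟩ := hzseg
    have hveq : ⟪e, (v : Euc d)⟫ = 0 :=
      Submodule.mem_orthogonal_singleton_iff_inner_right.1 v.2
    have hqw : ⟪e, w - x⟫ = L ^ 2 := by
      have : w - x = e + (v : Euc d) := by rw [hw, he]; abel
      rw [this, inner_add_right, hveq, add_zero, real_inner_self_eq_norm_sq]
    have hwx : ‖w - x‖ ≤ R := by
      have : w - x = e + (v : Euc d) := by rw [hw, he]; abel
      rw [this]
      calc ‖e + (v : Euc d)‖ ≤ ‖e‖ + ‖(v : Euc d)‖ := norm_add_le _ _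
        _ ≤ L + ρ := by rw [← hL]; gcongr; exact hv
    have hzt' : x + t • (w - x) = z := hzt
    have hzx : z - x = t • (w - x) := by rw [← hzt', add_sub_cancel_left]
    have hqz : q z = t * L ^ 2 := by
      rw [hq]
      simp only
      rw [hzx, inner_smul_right, hqw]
    have hzΩ : z ∉ Ω := by
      intro hzΩ
      have := hΩopen.frontier_eq ▸ hzΓ
      exact this.2 hzΩ
    have hdist : ε ≤ ‖z - x‖ := by
      by_contra hlt
      push_neg at hlt
      exact hzΩ (hεball (by rw [mem_ball, dist_eq_norm]; exact hlt))
    have hznorm : ‖z - x‖ = t * ‖w - x‖ := by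
      rw [hzx, norm_smul, Real.norm_eq_abs, abs_of_nonneg ht.1]
    have ht0 : t₀ ≤ t := by
      rw [ht₀, div_le_iff₀ hR0]
      have h1 : t * ‖w - x‖ ≤ t * R := by
        apply mul_le_mul_of_nonneg_left hwx ht.1
      nlinarith [hdist, hznorm]
    have htpos : 0 < t := lt_of_lt_of_le ht₀0 ht0
    refine ⟨z, hzΓ, ?_, ?_, ?_⟩
    · rw [hqz, ha]
      have : t₀ * L ^ 2 ≤ t * L ^ 2 := by nlinarith
      exact this
    · rw [hznorm]
      calc t * ‖w - x‖ ≤ 1 * R := by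
            apply mul_le_mul ht.2 hwx (norm_nonneg _) zero_le_one
        _ = R := one_mul R
    · rw [hπ]
      simp only
      have hsc : L ^ 2 / (t * L ^ 2) * t = 1 := by
        field_simp
      rw [hzx, inner_smul_right, hqw, ← hL, smul_smul, hsc, one_smul, hw]
      abel
  -- choice function
  set f : F → Euc d := fun v => if h : ‖v‖ ≤ ρ then (hex v h).choose else x with hf
  have hfP : ∀ v : F, ‖v‖ ≤ ρ → (f v) ∈ frontier Ω ∧ a ≤ q (f v) ∧ ‖f v - x‖ ≤ R ∧
      π (f v) = y + (v : Euc d) := by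
    intro v hv
    rw [hf]
    simp only [dif_pos hv]
    exact (hex v hv).choose_spec
  set x₀ : Euc d := f 0 with hx₀
  have hx₀P := hfP 0 (by simp [hρ.le])
  have hx₀Γ : x₀ ∈ frontier Ω := hx₀P.1
  set R₀ : ℝ := 4 * R + 1 with hR₀
  have hR₀0 : 0 < R₀ := by positivity
  have hfA : ∀ v : F, ‖v‖ ≤ ρ → f v ∈ frontier Ω ∩ closedBall x₀ (R₀ / 2) := by
    intro v hv
    refine ⟨(hfP v hv).1, ?_⟩
    rw [mem_closedBall]
    calc dist (f v) x₀ ≤ dist (f v) x + dist x x₀ := dist_triangle _ _ _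
      _ = ‖f v - x‖ + ‖x₀ - x‖ := by rw [dist_eq_norm, dist_comm, dist_eq_norm]
      _ ≤ R + R := add_le_add (hfP v hv).2.2.1 hx₀P.2.2.1
      _ ≤ R₀ / 2 := by rw [hR₀]; linarith
  obtain ⟨μ, -, -, hA⟩ := hreg
  obtain ⟨c, hc, hb⟩ := hA x₀ hx₀Γ R₀ hR₀0
  set Λ : ℝ := L ^ 2 / a + L ^ 3 * R / a ^ 2 with hΛ
  have hΛ0 : 0 < Λ := by positivity
  set V₁ : ℝ≥0∞ := volume (ball (0 : F) 1) with hV₁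
  have hV₁0 : V₁ ≠ 0 := (measure_ball_pos volume 0 one_pos).ne'
  have hV₁top : V₁ ≠ ⊤ := measure_ball_lt_top.ne
  -- the key inequality, for all small r
  have key : ∀ r : ℝ, 0 < r → r ≤ R₀ →
      ρ ^ m ≤ c ^ 2 * (3 * R₀) ^ s * (2 * Λ) ^ m * r ^ ((m : ℝ) - s) := by
    intro r hr hrR
    obtain ⟨T, hTA, hTcard, hTcov⟩ := cover_lemma isClosed_frontier.measurableSet μ hx₀Γ
      hR₀0 hc hs0 hb r hr hrR
    set g : F → Euc d := fun v => if h : ∃ t ∈ T, dist (f v) t < r then h.choose else x₀ with hg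
    have hgP : ∀ v : F, ‖v‖ ≤ ρ → g v ∈ T ∧ dist (f v) (g v) < r := by
      intro v hv
      have h1 := hTcov (hfA v hv)
      simp only [mem_iUnion, mem_ball, exists_prop] at h1
      have h2 : ∃ t ∈ T, dist (f v) t < r := h1
      rw [hg]
      simp only [dif_pos h2]
      exact h2.choose_spec
    set σ : Euc d → F := fun t =>
      if h : ∃ v : F, ‖v‖ ≤ ρ ∧ g v = t then h.choose else 0 with hσ
    have hcov2 : closedBall (0 : F) ρ ⊆ ⋃ t ∈ T, closedBall (σ t) (2 * Λ * r) := by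
      intro v hv
      have hv' : ‖v‖ ≤ ρ := by simpa [mem_closedBall, dist_zero_right] using hv
      obtain ⟨hgT, hgd⟩ := hgP v hv'
      have hσex : ∃ v' : F, ‖v'‖ ≤ ρ ∧ g v' = g v := ⟨v, hv', rfl⟩
      have hσspec : ‖σ (g v)‖ ≤ ρ ∧ g (σ (g v)) = g v := by
        rw [hσ]; simp only [dif_pos hσex]; exact hσex.choose_spec
      set v₀ : F := σ (g v) with hv₀
      obtain ⟨hv₀ρ, hv₀g⟩ := hσspec
      have hgd₀ : dist (f v₀) (g v) < r := by
        have := (hgP v₀ hv₀ρ).2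
        rwa [hv₀g] at this
      have hff : ‖f v - f v₀‖ ≤ 2 * r := by
        rw [← dist_eq_norm]
        calc dist (f v) (f v₀) ≤ dist (f v) (g v) + dist (g v) (f v₀) := dist_triangle _ _ _
          _ ≤ r + r := add_le_add hgd.le (by rw [dist_comm]; exact hgd₀.le)
          _ = 2 * r := by ring
      obtain ⟨-, hqv, hnv, hπv⟩ := hfP v hv'
      obtain ⟨-, hqv₀, hnv₀, hπv₀⟩ := hfP v₀ hv₀ρ
      have hlip := proj_lip x e ha0 (le_of_lt hR0) (f v) (f v₀) hqv hnv hqv₀ hnv₀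
      have hπeq : π (f v) - π (f v₀) = (v : Euc d) - (v₀ : Euc d) := by
        rw [hπv, hπv₀]; abel
      have hnorm : ‖(v : Euc d) - (v₀ : Euc d)‖ ≤ Λ * (2 * r) := by
        rw [← hπeq]
        calc ‖π (f v) - π (f v₀)‖ ≤ Λ * ‖f v - f v₀‖ := hlip
          _ ≤ Λ * (2 * r) := by gcongr
      have hdvv : dist v v₀ ≤ 2 * Λ * r := by
        rw [dist_eq_norm, Submodule.coe_norm]
        push_cast
        linarith [hnorm]
      exact mem_iUnion₂.2 ⟨g v, hgT, mem_closedBall.2 hdvv⟩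
    -- measure estimates in F
    have hfinF : Module.finrank ℝ F = m := hm.symm
    have hlhs : volume (closedBall (0 : F) ρ) = ENNReal.ofReal (ρ ^ m) * V₁ := by
      rw [Measure.addHaar_closedBall _ _ hρ.le, hfinF, hV₁]
    have hrhs : volume (closedBall (0 : F) ρ) ≤
        (T.card : ℝ≥0∞) * (ENNReal.ofReal ((2 * Λ * r) ^ m) * V₁) := by
      calc volume (closedBall (0 : F) ρ) ≤ volume (⋃ t ∈ T, closedBall (σ t) (2 * Λ * r)) :=
            measure_mono hcov2
        _ ≤ ∑ t ∈ T, volume (closedBall (σ t) (2 * Λ * r)) := measure_biUnion_finset_le T _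
        _ = ∑ _t ∈ T, ENNReal.ofReal ((2 * Λ * r) ^ m) * V₁ := by
            apply Finset.sum_congr rfl
            intro t _
            rw [Measure.addHaar_closedBall _ _ (by positivity : (0:ℝ) ≤ 2 * Λ * r), hfinF, hV₁]
        _ = (T.card : ℝ≥0∞) * (ENNReal.ofReal ((2 * Λ * r) ^ m) * V₁) := by
            rw [Finset.sum_const, nsmul_eq_mul]
    have hcomb : ENNReal.ofReal (ρ ^ m) * V₁ ≤
        ENNReal.ofReal (c ^ 2 * (3 * R₀) ^ s / r ^ s * (2 * Λ * r) ^ m) * V₁ := by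
      rw [← hlhs]
      calc volume (closedBall (0 : F) ρ)
          ≤ (T.card : ℝ≥0∞) * (ENNReal.ofReal ((2 * Λ * r) ^ m) * V₁) := hrhs
        _ ≤ ENNReal.ofReal (c ^ 2 * (3 * R₀) ^ s / r ^ s) *
              (ENNReal.ofReal ((2 * Λ * r) ^ m) * V₁) := by
            gcongr
            rw [← ENNReal.ofReal_natCast]
            exact ENNReal.ofReal_le_ofReal hTcard
        _ = ENNReal.ofReal (c ^ 2 * (3 * R₀) ^ s / r ^ s * (2 * Λ * r) ^ m) * V₁ := by
            rw [← mul_assoc, ← ENNReal.ofReal_mul (by positivity)]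
    have hreal : ρ ^ m ≤ c ^ 2 * (3 * R₀) ^ s / r ^ s * (2 * Λ * r) ^ m := by
      have h1 := (ENNReal.mul_le_mul_iff_left hV₁0 hV₁top).1 hcomb
      exact (ENNReal.ofReal_le_ofReal_iff (by positivity)).1 h1
    have heq : c ^ 2 * (3 * R₀) ^ s / r ^ s * (2 * Λ * r) ^ m =
        c ^ 2 * (3 * R₀) ^ s * (2 * Λ) ^ m * r ^ ((m : ℝ) - s) := by
      rw [Real.rpow_sub hr, Real.rpow_natCast, mul_pow]
      have hrs : (0:ℝ) < r ^ s := Real.rpow_pos_of_pos hr s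
      field_simp
    linarith [hreal, heq.le, heq.ge]
  -- contradiction as r → 0
  set p : ℝ := (m : ℝ) - s with hp
  have hp0 : 0 < p := by rw [hp]; linarith
  set K₁ : ℝ := c ^ 2 * (3 * R₀) ^ s * (2 * Λ) ^ m with hK₁
  have hK₀ : 0 < ρ ^ m := by positivity
  have htend : Filter.Tendsto (fun r : ℝ => K₁ * r ^ p) (nhdsWithin 0 (Ioi 0)) (nhds 0) := by
    have h0 := (Real.continuousAt_rpow_const 0 p (Or.inr hp0.le)).tendsto
    rw [Real.zero_rpow hp0.ne'] at h0
    have h1 := h0.const_mul K₁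
    rw [mul_zero] at h1
    exact h1.mono_left nhdsWithin_le_nhds
  have hev : ∀ᶠ r in nhdsWithin (0:ℝ) (Ioi 0), K₁ * r ^ p < ρ ^ m :=
    htend.eventually_lt_const hK₀
  have hev2 : ∀ᶠ r in nhdsWithin (0:ℝ) (Ioi 0), 0 < r ∧ r ≤ R₀ := by
    filter_upwards [Ioc_mem_nhdsGT_of_mem (Set.left_mem_Ico.2 hR₀0)] with r hr
    exact ⟨hr.1, hr.2⟩
  obtain ⟨r, hlt, hr0, hrR⟩ := (hev.and hev2).exists
  have := key r hr0 hrR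
  linarith

/-- If the boundary of a domain `Ω ⊆ ℝ^d` is Ahlfors `s`-regular with `s ∈ (0, d-1)`,
then `|Ω ∩ B(x;r)| = |B(x;r)|` for all `x ∈ Γ` and `r > 0`; equivalently the interior
of the complement of `Ω` is empty. -/
theorem stmt_4 (d : ℕ) (Ω : Set (Euc d)) (hΩopen : IsOpen Ω) (hΩconn : IsConnected Ω)
    (s : ℝ) (hs0 : 0 < s) (hsd : s < (d : ℝ) - 1)
    (hreg : AhlforsRegular d (frontier Ω) s) :
    (∀ x ∈ frontier Ω, ∀ r : ℝ, 0 < r →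
        volume (Ω ∩ ball x r) = volume (ball x r)) ∧
      interior Ωᶜ = ∅ := by
  have hΩne : Ω.Nonempty := hΩconn.nonempty
  have hint : interior Ωᶜ = ∅ := interior_compl_empty hΩopen hΩne hs0 hsd hreg
  have hΓnull : volume (frontier Ω) = 0 :=
    null_lemma isClosed_frontier.measurableSet hs0 (by linarith) hreg
  refine ⟨?_, hint⟩
  intro x hx r hr
  refine le_antisymm (measure_mono inter_subset_right) ?_
  have hsub : ball x r ⊆ (Ω ∩ ball x r) ∪ frontier Ω := by
    intro z hz
    by_cases hzΩ : z ∈ Ω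
    · exact Or.inl ⟨hzΩ, hz⟩
    · refine Or.inr ?_
      rw [← frontier_compl]
      exact ⟨subset_closure hzΩ, by rw [hint]; exact notMem_empty z⟩
  calc volume (ball x r) ≤ volume ((Ω ∩ ball x r) ∪ frontier Ω) := measure_mono hsub
    _ ≤ volume (Ω ∩ ball x r) + volume (frontier Ω) := measure_union_le _ _
    _ = volume (Ω ∩ ball x r) := by rw [hΓnull, add_zero]
end
end

section
/- Let Ω ⊆ ℝ^d be a domain with boundary Γ, let z ∈ Γ and R > 0, and suppose that Ω_{z,R} = Ω ∩ B(z;R) is Ω-uniform with constant σ ≥ 1. Then there exist b', R' > 0 (one may take b' = |B(0;1)|·(1+2σ²)^{−d} and R' = 2σ(1+2σ²)^{−1}R) such that |Ω ∩ B(x;r)| ≥ b'·r^d for all x ∈ Γ ∩ B(z;R/2) and all r ∈ (0,R'). -/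
open MeasureTheory Metric Set
open scoped ENNReal NNReal

noncomputable section

set_option maxHeartbeats 1000000

/-- The uniformity curve condition: a rectifiable curve `γ : [0,1] → Ω` from `x` to `y`
of length at most `σ·d(x;y)` with `d_Γ(w) ≥ σ⁻¹·min(d(x;w), d(w;y))` along the curve. -/
def UniformCurve (d : ℕ) (Ω : Set (Euc d)) (σ : ℝ) (x y : Euc d) : Prop :=
  ∃ γ : ℝ → Euc d, ContinuousOn γ (Icc 0 1) ∧ γ 0 = x ∧ γ 1 = y ∧
    (∀ t ∈ Icc (0 : ℝ) 1, γ t ∈ Ω) ∧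
    eVariationOn γ (Icc 0 1) ≤ ENNReal.ofReal (σ * dist x y) ∧
    ∀ t ∈ Icc (0 : ℝ) 1,
      σ⁻¹ * min (dist x (γ t)) (dist (γ t) y) ≤ infDist (γ t) (frontier Ω)

/-- `Ω_{z,R} = Ω ∩ B(z;R)` is `Ω`-uniform with constant `σ`. -/
def OmegaUniform (d : ℕ) (Ω : Set (Euc d)) (σ : ℝ) (z : Euc d) (R : ℝ) : Prop :=
  ∀ x ∈ Ω ∩ ball z R, ∀ y ∈ Ω ∩ ball z R, UniformCurve d Ω σ x y

/-- In an open set, a ball around a point whose radius is at most the distance to the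
frontier is contained in the set. -/
lemma aux_ball_subset {d : ℕ} {Ω : Set (Euc d)} (hΩ : IsOpen Ω) {w : Euc d} (hw : w ∈ Ω)
    {ρ : ℝ} (hρ : ρ ≤ infDist w (frontier Ω)) : ball w ρ ⊆ Ω := by
  rcases le_or_gt ρ 0 with h | hρpos
  · simp [ball_eq_empty.2 h]
  have hsub : ball w ρ ⊆ Ω ∪ (closure Ω)ᶜ := by
    intro y hy
    by_contra hcon
    simp only [mem_union, mem_compl_iff, not_or, not_not] at hcon
    have hyF : y ∈ frontier Ω := by
      rw [hΩ.frontier_eq]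
      exact ⟨hcon.2, hcon.1⟩
    have h1 : infDist w (frontier Ω) ≤ dist w y := infDist_le_dist_of_mem hyF
    rw [mem_ball, dist_comm] at hy
    linarith
  have hdisj : Disjoint Ω (closure Ω)ᶜ :=
    disjoint_compl_right.mono_left subset_closure
  exact (convex_ball w ρ).isPreconnected.subset_left_of_subset_union hΩ
    isClosed_closure.isOpen_compl hdisj hsub ⟨w, mem_ball_self hρpos, hw⟩

/-- If `Ω_{z,R}` is `Ω`-uniform then the volume density bound
`|Ω ∩ B(x;r)| ≥ b'·r^d` holds for all `x ∈ Γ ∩ B(z;R/2)` and all small `r > 0`. -/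
theorem stmt_5 (d : ℕ) (Ω : Set (Euc d)) (hΩopen : IsOpen Ω) (hΩconn : IsConnected Ω)
    (z : Euc d) (hz : z ∈ frontier Ω) (R : ℝ) (hR : 0 < R)
    (σ : ℝ) (hσ : 1 ≤ σ) (hunif : OmegaUniform d Ω σ z R) :
    ∃ b' > (0 : ℝ), ∃ R' > (0 : ℝ), ∀ x ∈ frontier Ω ∩ ball z (R / 2),
      ∀ r : ℝ, 0 < r → r < R' →
        ENNReal.ofReal (b' * r ^ (d : ℝ)) ≤ volume (Ω ∩ ball x r) := by
  have hσpos : (0 : ℝ) < σ := lt_of_lt_of_le one_pos hσ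
  -- d = 0 is impossible
  rcases Nat.eq_zero_or_pos d with hd | hd
  · exfalso
    subst hd
    obtain ⟨w₀, hw₀⟩ := hΩconn.nonempty
    have hΩuniv : Ω = univ := eq_univ_of_forall fun y => by rwa [Subsingleton.elim y w₀]
    rw [hΩuniv, frontier_univ] at hz
    exact hz
  haveI : Nonempty (Fin d) := Fin.pos_iff_nonempty.mp hd
  haveI : Nontrivial (Euc d) := inferInstance
  obtain ⟨w₀, hw₀⟩ := hΩconn.nonempty
  obtain ⟨ρ₀, hρ₀pos, hρ₀⟩ := Metric.isOpen_iff.1 hΩopen w₀ hw₀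
  set V : ℝ≥0∞ := volume (ball (0 : Euc d) 1) with hV
  have hVpos : 0 < V := measure_ball_pos volume 0 one_pos
  have hVtop : V ≠ ⊤ := measure_ball_lt_top.ne
  have hVt : (0:ℝ) < V.toReal := ENNReal.toReal_pos hVpos.ne' hVtop
  refine ⟨V.toReal * ((16 * σ ^ 2)⁻¹) ^ d, ?_, min R ρ₀, lt_min hR hρ₀pos, ?_⟩
  · have h16 : (0:ℝ) < 16 * σ ^ 2 := by positivity
    positivity
  rintro x ⟨hxΓ, hxz⟩ r hr hrR'
  have hrR : r < R := lt_of_lt_of_le hrR' (min_le_left _ _)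
  have hrρ₀ : r < ρ₀ := lt_of_lt_of_le hrR' (min_le_right _ _)
  set a : ℝ := r / (4 * σ) with ha_def
  set ρ : ℝ := r / (16 * σ ^ 2) with hρ_def
  have ha : 0 < a := by rw [ha_def]; positivity
  have hρpos : 0 < ρ := by rw [hρ_def]; positivity
  have hra : r = 4 * (σ * a) := by rw [ha_def]; field_simp
  have haρ : a = 4 * (σ * ρ) := by rw [ha_def, hρ_def]; field_simp; ring
  have hrρ : r = 16 * (σ ^ 2 * ρ) := by rw [hρ_def]; field_simp
  have hu : a ≤ σ * a := le_mul_of_one_le_left ha.le hσ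
  have hu2 : ρ ≤ σ * ρ := le_mul_of_one_le_left hρpos.le hσ
  have hu3 : σ * ρ ≤ σ ^ 2 * ρ := by nlinarith
  have ha_le : a ≤ r / 4 := by nlinarith
  have hxz' : dist x z < R / 2 := mem_ball.1 hxz
  -- pick p ∈ Ω close to x
  have hxcl : x ∈ closure Ω := frontier_subset_closure hxΓ
  obtain ⟨p, hpΩ, hxp⟩ := Metric.mem_closure_iff.1 hxcl (a / 2) (by positivity)
  -- x ∉ Ω
  have hxnΩ : x ∉ Ω := by
    rw [hΩopen.frontier_eq] at hxΓ
    exact hxΓ.2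
  -- a point of Ω far from x
  have hDpos : 0 < dist x w₀ := dist_pos.2 (fun h => hxnΩ (h ▸ hw₀))
  set D : ℝ := dist x w₀ with hD
  have hDne : D ≠ 0 := hDpos.ne'
  set c : ℝ := ρ₀ / (2 * D) with hc
  have hcpos : 0 < c := by rw [hc]; positivity
  set v : Euc d := w₀ + c • (w₀ - x) with hv
  have hnorm : ‖w₀ - x‖ = D := by rw [← dist_eq_norm, dist_comm w₀ x]
  have hcD : c * D = ρ₀ / 2 := by rw [hc]; field_simp
  have hvΩ : v ∈ Ω := by
    apply hρ₀
    rw [mem_ball, hv]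
    have h1 : w₀ + c • (w₀ - x) - w₀ = c • (w₀ - x) := by abel
    rw [dist_eq_norm, h1, norm_smul, Real.norm_eq_abs, abs_of_pos hcpos, hnorm, hcD]
    linarith
  have hxv : dist x v = D + ρ₀ / 2 := by
    have hveq : v - x = (1 + c) • (w₀ - x) := by
      rw [hv, add_smul, one_smul]; abel
    rw [dist_eq_norm', hveq, norm_smul, Real.norm_eq_abs,
      abs_of_pos (by positivity : (0:ℝ) < 1 + c), hnorm]
    nlinarith [hcD]
  -- find q ∈ Ω with dist x q = a by IVT
  have haIcc : a ∈ Icc (dist x p) (dist x v) := by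
    constructor
    · linarith
    · rw [hxv]; linarith
  obtain ⟨q, hqΩ, hq⟩ := hΩconn.isPreconnected.intermediate_value hpΩ hvΩ
    ((continuous_const.dist continuous_id).continuousOn) haIcc
  simp only [id] at hq  -- hq : dist x q = a
  -- p and q are in ball z R
  have hpball : p ∈ ball z R := by
    rw [mem_ball]
    have h1 := dist_triangle p x z
    have h2 := dist_comm p x
    linarith
  have hqball : q ∈ ball z R := by
    rw [mem_ball]
    have h1 := dist_triangle q x z
    have h2 := dist_comm q x
    linarith
  -- get the uniform curve
  obtain ⟨γ, hγc, hγ0, hγ1, hγΩ, hγlen, hγdist⟩ := hunif p ⟨hpΩ, hpball⟩ q ⟨hqΩ, hqball⟩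
  -- find the "midpoint" of the curve
  set g : ℝ → ℝ := fun t => dist p (γ t) - dist (γ t) q with hg
  have hgc : ContinuousOn g (Icc 0 1) :=
    (((continuous_const.dist continuous_id).comp_continuousOn hγc).sub
      ((continuous_id.dist continuous_const).comp_continuousOn hγc))
  have hg0 : g 0 = -dist p q := by simp [hg, hγ0]
  have hg1 : g 1 = dist p q := by simp [hg, hγ1]
  have h0mem : (0:ℝ) ∈ Icc (g 0) (g 1) := by
    rw [hg0, hg1]
    have := dist_nonneg (x := p) (y := q)
    exact ⟨by linarith, by linarith⟩
  obtain ⟨t, ht, hgt⟩ := intermediate_value_Icc zero_le_one hgc h0mem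
  set w : Euc d := γ t with hw
  have hwΩ : w ∈ Ω := hγΩ t ht
  have heq : dist p w = dist w q := by
    simp only [hg] at hgt
    linarith [hgt]
  -- bounds on dist p q
  have hpq_lb : a / 2 ≤ dist p q := by
    have h1 := dist_triangle x p q
    linarith
  have hpq_ub : dist p q ≤ 3 * a / 2 := by
    have h1 := dist_triangle p x q
    have h2 := dist_comm p x
    linarith
  have hpw_lb : dist p q / 2 ≤ dist p w := by
    have h1 := dist_triangle p w q
    linarith
  -- the distance from w to the frontier is at least ρ
  have h5 : σ * ρ ≤ dist p w := by linarith
  have hinf : ρ ≤ infDist w (frontier Ω) := by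
    have h1 := hγdist t ht
    rw [← hw, ← heq, min_self] at h1
    have h6 : ρ ≤ σ⁻¹ * dist p w := by
      rw [inv_mul_eq_div, le_div_iff₀ hσpos]
      linarith
    linarith
  -- length bound gives dist p w ≤ σ * dist p q
  have hpw_ub : dist p w ≤ σ * dist p q := by
    have h1 : edist (γ 0) (γ t) ≤ eVariationOn γ (Icc 0 1) :=
      eVariationOn.edist_le γ (left_mem_Icc.2 zero_le_one) ht
    have h1' : edist p w ≤ eVariationOn γ (Icc 0 1) := by
      rw [← hγ0]; exact h1
    have h2 : edist p w ≤ ENNReal.ofReal (σ * dist p q) := le_trans h1' hγlen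
    rw [edist_dist] at h2
    exact (ENNReal.ofReal_le_ofReal_iff (by positivity)).1 h2
  -- dist x w ≤ r / 2
  have hxw : dist x w ≤ r / 2 := by
    have h1 := dist_triangle x p w
    have h2 : σ * dist p q ≤ σ * (3 * a / 2) := by
      apply mul_le_mul_of_nonneg_left hpq_ub hσpos.le
    nlinarith
  -- ball w ρ ⊆ Ω ∩ ball x r
  have hball1 : ball w ρ ⊆ Ω := aux_ball_subset hΩopen hwΩ hinf
  have hball2 : ball w ρ ⊆ ball x r := by
    intro y hy
    rw [mem_ball] at hy ⊢
    have h1 := dist_triangle y w x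
    have h2 := dist_comm w x
    nlinarith
  have hballsub : ball w ρ ⊆ Ω ∩ ball x r := subset_inter hball1 hball2
  -- compute the volume
  have hvol : volume (ball w ρ) = ENNReal.ofReal (ρ ^ d) * V := by
    rw [Measure.addHaar_ball volume w hρpos.le, finrank_euclideanSpace_fin]
  have hkey : ENNReal.ofReal (V.toReal * ((16 * σ ^ 2)⁻¹) ^ d * r ^ (d : ℝ))
      = ENNReal.ofReal (ρ ^ d) * V := by
    rw [Real.rpow_natCast]
    have hρd : ρ ^ d = (16 * σ ^ 2)⁻¹ ^ d * r ^ d := by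
      rw [hρ_def, div_eq_inv_mul, mul_pow]
    rw [mul_assoc, ← hρd, ENNReal.ofReal_mul ENNReal.toReal_nonneg,
      ENNReal.ofReal_toReal hVtop, mul_comm]
  calc ENNReal.ofReal (V.toReal * ((16 * σ ^ 2)⁻¹) ^ d * r ^ (d : ℝ))
      = ENNReal.ofReal (ρ ^ d) * V := hkey
    _ = volume (ball w ρ) := hvol.symm
    _ ≤ volume (Ω ∩ ball x r) := measure_mono hballsub
end
end

section
/- Let Ω ⊆ ℝ^d be a domain with boundary Γ, z ∈ Γ and ρ > 0. Suppose there are s ∈ (0,d) and c', R' > 0 such that |{x ∈ Ω ∩ B(z;ρ) : d_Γ(x) < τ}| ≥ c'·τ^{d−s} for all τ ∈ (0,R'). If δ is a real number with 0 ≤ δ < 2 + s − d, then there is a > 0 such that ∫_{Ω∩B(z;ρ)} d_Γ(x)^{δ−2} dx ≥ a·τ^{−(2+s−d−δ)} for all τ ∈ (0,R'); in particular ∫_{Ω∩B(z;ρ)} d_Γ(x)^{δ−2} dx = ∞. -/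
open MeasureTheory Metric Set
open scoped ENNReal NNReal

noncomputable section

/-- The divergence estimate in the proof of Proposition 3.5: if
`|{x ∈ Ω ∩ B(z;ρ) : d_Γ(x) < τ}| ≥ c'·τ^(d-s)` for all small `τ` and
`0 ≤ δ < 2 + s - d`, then `∫_{Ω ∩ B(z;ρ)} d_Γ^{δ-2} ≥ a·τ^{-(2+s-d-δ)}` for all small
`τ`; in particular the integral is infinite. -/
theorem stmt_15 (d : ℕ) (Ω : Set (Euc d)) (hΩopen : IsOpen Ω) (hΩconn : IsConnected Ω)
    (z : Euc d) (hz : z ∈ frontier Ω) (ρ : ℝ) (hρ : 0 < ρ)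
    (s : ℝ) (hs0 : 0 < s) (hsd : s < d) (c' R' : ℝ) (hc' : 0 < c') (hR' : 0 < R')
    (hvol : ∀ τ : ℝ, 0 < τ → τ < R' →
      ENNReal.ofReal (c' * τ ^ ((d : ℝ) - s)) ≤
        volume {x ∈ Ω ∩ ball z ρ | infDist x (frontier Ω) < τ})
    (δ : ℝ) (hδ0 : 0 ≤ δ) (hδ : δ < 2 + s - d) :
    ∃ a > (0 : ℝ),
      (∀ τ : ℝ, 0 < τ → τ < R' →
        ENNReal.ofReal (a * τ ^ (-(2 + s - d - δ))) ≤
          ∫⁻ x in Ω ∩ ball z ρ, ENNReal.ofReal (infDist x (frontier Ω) ^ (δ - 2))) ∧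
      (∫⁻ x in Ω ∩ ball z ρ, ENNReal.ofReal (infDist x (frontier Ω) ^ (δ - 2))) = ⊤ := by
  set β : ℝ := 2 + s - d - δ with hβdef
  have hβ : 0 < β := by simp only [hβdef]; linarith
  set I := ∫⁻ x in Ω ∩ ball z ρ, ENNReal.ofReal (infDist x (frontier Ω) ^ (δ - 2)) with hI
  have hfront : (frontier Ω).Nonempty := ⟨z, hz⟩
  -- main estimate with a = c'
  have main : ∀ τ : ℝ, 0 < τ → τ < R' → ENNReal.ofReal (c' * τ ^ (-β)) ≤ I := by
    intro τ hτ0 hτR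
    set A := {x ∈ Ω ∩ ball z ρ | infDist x (frontier Ω) < τ} with hA
    have hAmeas : MeasurableSet A := by
      have : A = (Ω ∩ ball z ρ) ∩ (fun x => infDist x (frontier Ω)) ⁻¹' (Iio τ) := by
        ext x
        simp only [hA, mem_setOf_eq, mem_inter_iff, mem_preimage, mem_Iio]
      rw [this]
      exact ((hΩopen.inter isOpen_ball).measurableSet).inter
        (measurable_infDist measurableSet_Iio)
    have hsub : A ⊆ Ω ∩ ball z ρ := fun x hx => hx.1
    have step1 : (∫⁻ x in A, ENNReal.ofReal (infDist x (frontier Ω) ^ (δ - 2))) ≤ I := by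
      exact lintegral_mono' (Measure.restrict_mono hsub le_rfl) le_rfl
    have step2 : ENNReal.ofReal (τ ^ (δ - 2)) * volume A ≤
        ∫⁻ x in A, ENNReal.ofReal (infDist x (frontier Ω) ^ (δ - 2)) := by
      rw [← setLIntegral_const A (ENNReal.ofReal (τ ^ (δ - 2)))]
      apply setLIntegral_mono' hAmeas
      intro x hx
      apply ENNReal.ofReal_le_ofReal
      have hxΩ : x ∈ Ω := hx.1.1
      have hxpos : 0 < infDist x (frontier Ω) := by
        rw [← isClosed_frontier.notMem_iff_infDist_pos hfront]
        intro hmem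
        rw [frontier, hΩopen.interior_eq] at hmem
        exact hmem.2 hxΩ
      have hxlt : infDist x (frontier Ω) ≤ τ := le_of_lt hx.2
      exact Real.rpow_le_rpow_of_nonpos hxpos hxlt (by linarith)
    have step3 : ENNReal.ofReal (c' * τ ^ (-β)) ≤
        ENNReal.ofReal (τ ^ (δ - 2)) * volume A := by
      have hvolA := hvol τ hτ0 hτR
      calc ENNReal.ofReal (c' * τ ^ (-β))
          = ENNReal.ofReal (τ ^ (δ - 2)) * ENNReal.ofReal (c' * τ ^ ((d : ℝ) - s)) := by
            rw [← ENNReal.ofReal_mul (Real.rpow_nonneg hτ0.le _)]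
            congr 1
            rw [show -β = (δ - 2) + ((d : ℝ) - s) by simp only [hβdef]; ring,
              Real.rpow_add hτ0]
            ring
        _ ≤ ENNReal.ofReal (τ ^ (δ - 2)) * volume A := by
            exact mul_le_mul_right hvolA _
    exact le_trans (le_trans step3 step2) step1
  refine ⟨c', hc', main, ?_⟩
  by_contra hne
  have hItop : I ≠ ⊤ := hne
  set M := I.toReal + 1 with hM
  have hMpos : 0 < M := by positivity
  set T := M / c' with hT
  have hTpos : 0 < T := div_pos hMpos hc'
  set τ := min (R' / 2) (T ^ (-(1 / β))) with hτ
  have hτpos : 0 < τ := lt_min (by linarith) (Real.rpow_pos_of_pos hTpos _)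
  have hτR : τ < R' := lt_of_le_of_lt (min_le_left _ _) (by linarith)
  have hτle : τ ≤ T ^ (-(1 / β)) := min_le_right _ _
  have hkey : T ≤ τ ^ (-β) := by
    have : (T ^ (-(1 / β))) ^ (-β) ≤ τ ^ (-β) :=
      Real.rpow_le_rpow_of_nonpos hτpos hτle (by linarith)
    calc T = (T ^ (-(1 / β))) ^ (-β) := by
            rw [← Real.rpow_mul hTpos.le,
              show (-(1 / β)) * (-β) = 1 by field_simp, Real.rpow_one]
      _ ≤ τ ^ (-β) := this
  have hMle : M ≤ c' * τ ^ (-β) := by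
    calc M = c' * T := by rw [hT]; field_simp
      _ ≤ c' * τ ^ (-β) := by nlinarith
  have h1 : ENNReal.ofReal M ≤ I :=
    le_trans (ENNReal.ofReal_le_ofReal hMle) (main τ hτpos hτR)
  have h2 : M ≤ I.toReal := by
    have := (ENNReal.ofReal_le_iff_le_toReal hItop).mp h1
    exact this
  simp only [hM] at h2
  linarith
end
end
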